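/- Under the assumptions of the previous lemma (strictly increasing α_n with α_0 = 0, strictly decreasing positive γ_n, α_n + γ_n ≤ 1, the cross-ratio inequality (α_n - α_{n-1})/(α_n γ_{n-1} - α_{n-1} γ_n) ≤ (α_{n+1} γ_n - α_n γ_{n+1})/(γ_n - γ_{n+1}) for n ≥ 1, and γ_0 - γ_1 ≤ α_1 γ_0²), the sequence g_n defined by g_0 = 1/γ_0, g_n = (1/γ_n)(1 - α_n/g_{n-1}) is nonincreasing: g_{n+1} ≤ g_n for all n ≥ 0. -/

import Mathlib

theorem stmt_2 (α γ g : ℕ → ℝ)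
    (hα0 : α 0 = 0)
    (hαpos : ∀ n ≥ 1, 0 < α n)
    (hαmono : ∀ n, α n < α (n + 1))
    (hγpos : ∀ n, 0 < γ n)
    (hγmono : ∀ n, γ (n + 1) < γ n)
    (hsum : ∀ n, α n + γ n ≤ 1)
    (hcross : ∀ n ≥ 1,
      (α n - α (n - 1)) / (α n * γ (n - 1) - α (n - 1) * γ n) ≤
        (α (n + 1) * γ n - α n * γ (n + 1)) / (γ n - γ (n + 1)))
    (hinit : γ 0 - γ 1 ≤ α 1 * (γ 0) ^ 2)
    (hg0 : g 0 = 1 / γ 0)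
    (hg : ∀ n ≥ 1, g n = (1 / γ n) * (1 - α n / g (n - 1))) :
    ∀ n, g (n + 1) ≤ g n := by
  have hαnn : ∀ n, 0 ≤ α n := by
    intro n
    cases n with
    | zero => simp [hα0]
    | succ m => exact (hαpos _ (by omega)).le
  have hγd : ∀ n, 0 < γ n - γ (n + 1) := fun n => sub_pos.mpr (hγmono n)
  have hD : ∀ n, 0 < α (n + 1) * γ n - α n * γ (n + 1) := by
    intro n
    nlinarith [hαmono n, hγmono n, hγpos (n + 1), hαnn n]
  have hγ0le1 : γ 0 ≤ 1 := by have := hsum 0; linarith [hα0 ▸ this]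
  have key : ∀ n, 1 ≤ g n ∧ g (n + 1) ≤ g n ∧
      g (n + 1) ≤ (α (n + 2) * γ (n + 1) - α (n + 1) * γ (n + 2)) / (γ (n + 1) - γ (n + 2)) := by
    intro n
    induction n with
    | zero =>
      have hg0ge : 1 ≤ g 0 := by
        rw [hg0]; exact one_le_one_div (hγpos 0) hγ0le1
      have hg1 : g 1 = (1 / γ 1) * (1 - α 1 / g 0) := by simpa using hg 1 le_rfl
      have hg0pos : 0 < g 0 := by linarith
      have hα1 : 0 < α 1 := hαpos 1 le_rfl
      have hg1le : g 1 ≤ g 0 := by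
        rw [hg1, hg0]
        have e : α 1 / (1 / γ 0) = α 1 * γ 0 := by
          have h0' : γ 0 ≠ 0 := ne_of_gt (hγpos 0)
          field_simp
        rw [e, one_div_mul_eq_div, div_le_div_iff₀ (hγpos 1) (hγpos 0)]
        nlinarith [hγpos 0]
      have hM1 : (α 1 - α 0) / (α 1 * γ 0 - α 0 * γ 1) ≤
          (α 2 * γ 1 - α 1 * γ 2) / (γ 1 - γ 2) := by simpa using hcross 1 le_rfl
      have hlhs : (α 1 - α 0) / (α 1 * γ 0 - α 0 * γ 1) = 1 / γ 0 := by
        have h0 : α 1 ≠ 0 := ne_of_gt hα1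
        have h0' : γ 0 ≠ 0 := ne_of_gt (hγpos 0)
        rw [hα0]
        field_simp
        ring
      refine ⟨hg0ge, hg1le, ?_⟩
      calc g 1 ≤ g 0 := hg1le
        _ = 1 / γ 0 := hg0
        _ ≤ _ := by rw [← hlhs]; exact hM1
    | succ m ih =>
      obtain ⟨h1, h2, h3⟩ := ih
      have hgm : 0 < g m := by linarith
      have hgm1 : g (m + 1) = (1 / γ (m + 1)) * (1 - α (m + 1) / g m) := by
        simpa using hg (m + 1) (by omega)
      have hgm2 : g (m + 2) = (1 / γ (m + 2)) * (1 - α (m + 2) / g (m + 1)) := by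
        simpa using hg (m + 2) (by omega)
      -- 1 ≤ g (m+1)
      have hdivle : α (m + 1) / g m ≤ α (m + 1) := by
        rw [div_le_iff₀ hgm]; nlinarith [hαnn (m + 1)]
      have hgp1 : 1 ≤ g (m + 1) := by
        rw [hgm1, one_div_mul_eq_div, le_div_iff₀ (hγpos (m + 1))]
        have := hsum (m + 1); linarith
      have hgp1pos : 0 < g (m + 1) := by linarith
      -- g (m+1) ≤ M (m+1), rewritten as product form
      have hxle : g (m + 1) * (γ (m + 1) - γ (m + 2)) ≤
          α (m + 2) * γ (m + 1) - α (m + 1) * γ (m + 2) := by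
        rw [← le_div_iff₀ (hγd (m + 1))]; exact h3
      -- step A : f_{m+2}(g(m+1)) ≤ f_{m+1}(g(m+1))
      have r2 : (1 / γ (m + 2)) * (1 - α (m + 2) / g (m + 1)) =
          (g (m + 1) - α (m + 2)) / (γ (m + 2) * g (m + 1)) := by
        field_simp
      have r1 : (1 / γ (m + 1)) * (1 - α (m + 1) / g (m + 1)) =
          (g (m + 1) - α (m + 1)) / (γ (m + 1) * g (m + 1)) := by
        field_simp
      have stepA : (1 / γ (m + 2)) * (1 - α (m + 2) / g (m + 1)) ≤
          (1 / γ (m + 1)) * (1 - α (m + 1) / g (m + 1)) := by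
        rw [r2, r1, div_le_div_iff₀ (mul_pos (hγpos _) hgp1pos) (mul_pos (hγpos _) hgp1pos)]
        nlinarith [mul_le_mul_of_nonneg_left hxle hgp1pos.le]
      -- step B : f_{m+1}(g(m+1)) ≤ f_{m+1}(g m) = g (m+1)
      have stepB : (1 / γ (m + 1)) * (1 - α (m + 1) / g (m + 1)) ≤ g (m + 1) := by
        have hdd : α (m + 1) / g m ≤ α (m + 1) / g (m + 1) := by
          rw [div_le_div_iff₀ hgm hgp1pos]
          nlinarith [hαnn (m + 1)]
        have h' : (1 / γ (m + 1)) * (1 - α (m + 1) / g (m + 1)) ≤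
            (1 / γ (m + 1)) * (1 - α (m + 1) / g m) :=
          mul_le_mul_of_nonneg_left (by linarith) (le_of_lt (one_div_pos.mpr (hγpos _)))
        rw [← hgm1] at h'
        exact h'
      have hmono2 : g (m + 2) ≤ g (m + 1) := by
        rw [hgm2]; exact le_trans stepA stepB
      -- step C : g (m+2) ≤ M (m+2)
      have hMpos : 0 < (α (m + 2) * γ (m + 1) - α (m + 1) * γ (m + 2)) / (γ (m + 1) - γ (m + 2)) :=
        div_pos (hD (m + 1)) (hγd (m + 1))
      have stepC1 : g (m + 2) ≤ (1 / γ (m + 2)) *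
          (1 - α (m + 2) / ((α (m + 2) * γ (m + 1) - α (m + 1) * γ (m + 2)) / (γ (m + 1) - γ (m + 2)))) := by
        rw [hgm2]
        have hdd : α (m + 2) / ((α (m + 2) * γ (m + 1) - α (m + 1) * γ (m + 2)) / (γ (m + 1) - γ (m + 2)))
            ≤ α (m + 2) / g (m + 1) := by
          rw [div_le_div_iff₀ hMpos hgp1pos]
          nlinarith [hαnn (m + 2), h3]
        exact mul_le_mul_of_nonneg_left (by linarith) (le_of_lt (one_div_pos.mpr (hγpos _)))
      have stepC2 : (1 / γ (m + 2)) *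
          (1 - α (m + 2) / ((α (m + 2) * γ (m + 1) - α (m + 1) * γ (m + 2)) / (γ (m + 1) - γ (m + 2))))
          = (α (m + 2) - α (m + 1)) / (α (m + 2) * γ (m + 1) - α (m + 1) * γ (m + 2)) := by
        have d1 : (α (m + 2) * γ (m + 1) - α (m + 1) * γ (m + 2)) ≠ 0 := ne_of_gt (hD (m + 1))
        have d2 : (γ (m + 1) - γ (m + 2)) ≠ 0 := ne_of_gt (hγd (m + 1))
        have d3 : γ (m + 2) ≠ 0 := ne_of_gt (hγpos (m + 2))
        rw [div_div_eq_mul_div, one_sub_div d1, one_div_mul_eq_div, div_div,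
          div_eq_div_iff (mul_ne_zero d1 d3) d1]
        ring
      have stepC3 : (α (m + 2) - α (m + 1)) / (α (m + 2) * γ (m + 1) - α (m + 1) * γ (m + 2)) ≤
          (α (m + 3) * γ (m + 2) - α (m + 2) * γ (m + 3)) / (γ (m + 2) - γ (m + 3)) := by
        simpa using hcross (m + 2) (by omega)
      exact ⟨hgp1, hmono2, le_trans stepC1 (stepC2 ▸ stepC3)⟩
  intro n
  exact (key n).2.1
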